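/- Let E be an unstable H*V-A-module which is free as an H*V-module and such that Ē is reduced as an unstable A-module. Then E is reduced as an unstable A-module. -/

import Mathlib

/-!
Common preamble: the mod 2 Steenrod algebra `SteenrodAlgebra` (defined by generators
`Sq i` and the Adem relations), the category `U` of unstable modules over it
(`UnstableModule`, `UnstableHom`), the polynomial algebra `H^*V` for `V` an elementary
abelian 2-group of rank `d` (`HVSetup`), the category `H^*V-U` of unstable
`H^*V`-`A`-modules (`HVModule`, `HVHom`), and the various notions used in the paper
(nilpotent, reduced, nil-closed, injectives, injective hulls, Brown-Gitler modules,
tensor products, direct sums, the functor `Fix`, bar quotients `Ē = F_2 ⊗_{H^*V} E`, …).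
-/

noncomputable section

/-- The Adem relations (together with `Sq⁰ = 1`) on the free `ZMod 2`-algebra
generated by symbols `Sq i`, `i : ℕ`. -/
inductive AdemRel : FreeAlgebra (ZMod 2) ℕ → FreeAlgebra (ZMod 2) ℕ → Prop
  | adem (a b : ℕ) (ha : 0 < a) (hab : a < 2 * b) :
      AdemRel (FreeAlgebra.ι (ZMod 2) a * FreeAlgebra.ι (ZMod 2) b)
        (∑ c ∈ Finset.range (a / 2 + 1),
          ((Nat.choose (b - c - 1) (a - 2 * c) : ZMod 2)) •
            (FreeAlgebra.ι (ZMod 2) (a + b - c) * FreeAlgebra.ι (ZMod 2) c))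
  | unit : AdemRel (FreeAlgebra.ι (ZMod 2) 0) 1

/-- The mod 2 Steenrod algebra `A`. -/
abbrev SteenrodAlgebra : Type := RingQuot AdemRel

/-- The Steenrod squares `Sq i ∈ A`. -/
def Sq (i : ℕ) : SteenrodAlgebra :=
  RingQuot.mkAlgHom (ZMod 2) AdemRel (FreeAlgebra.ι (ZMod 2) i)

/-- An unstable module over the mod 2 Steenrod algebra: a graded `ZMod 2`-vector space
with a compatible `A`-action such that `Sq i` raises degrees by `i` and
`Sq i x = 0` whenever `i > |x|` (the instability condition).  Objects of `U`. -/
structure UnstableModule : Type 1 where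
  carrier : Type
  [acg : AddCommGroup carrier]
  [modA : Module SteenrodAlgebra carrier]
  [modF : Module (ZMod 2) carrier]
  [tower : IsScalarTower (ZMod 2) SteenrodAlgebra carrier]
  grading : ℕ → Submodule (ZMod 2) carrier
  isInternal : DirectSum.IsInternal grading
  sq_mem : ∀ (i n : ℕ) (x : carrier), x ∈ grading n → Sq i • x ∈ grading (n + i)
  instability : ∀ (i n : ℕ) (x : carrier), x ∈ grading n → n < i → Sq i • x = 0

attribute [instance] UnstableModule.acg UnstableModule.modA UnstableModule.modF
  UnstableModule.tower

/-- Morphisms of `U`: `A`-linear maps of degree zero. -/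
structure UnstableHom (M N : UnstableModule) where
  toFun : M.carrier →ₗ[SteenrodAlgebra] N.carrier
  map_grading : ∀ (n : ℕ) (x : M.carrier), x ∈ M.grading n → toFun x ∈ N.grading n

/-- Composition of morphisms of `U`. -/
def UnstableHom.comp {M N P : UnstableModule} (g : UnstableHom N P) (f : UnstableHom M N) :
    UnstableHom M P :=
  ⟨g.toFun.comp f.toFun, fun n x hx => g.map_grading n _ (f.map_grading n x hx)⟩

/-- The identity morphism of `U`. -/
def UnstableHom.id (M : UnstableModule) : UnstableHom M M :=
  ⟨LinearMap.id, fun _ _ h => h⟩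

/-- `M ≅ N` in the category `U`. -/
def UIso (M N : UnstableModule) : Prop :=
  ∃ (f : UnstableHom M N) (g : UnstableHom N M),
    (∀ x, g.toFun (f.toFun x) = x) ∧ ∀ y, f.toFun (g.toFun y) = y

/-- `sq0Iter M k n x` is the `k`-fold iterate of `Sq₀ : x ↦ Sq^{|x|} x` on an element
`x` of degree `n` (whose `j`-th iterate has degree `2^j * n`). -/
def sq0Iter (M : UnstableModule) : ℕ → ℕ → M.carrier → M.carrier
  | 0, _, x => x
  | k + 1, n, x => Sq (2 ^ k * n) • sq0Iter M k n x

/-- An unstable module is nilpotent if every (homogeneous) element is killed by some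
iterate of `Sq₀`. -/
def IsNilpotentU (M : UnstableModule) : Prop :=
  ∀ (n : ℕ) (x : M.carrier), x ∈ M.grading n → ∃ k, sq0Iter M k n x = 0

/-- An unstable module is reduced if `Sq₀ : x ↦ Sq^{|x|} x` is injective. -/
def IsReducedU (M : UnstableModule) : Prop :=
  ∀ (n : ℕ) (x : M.carrier), x ∈ M.grading n → Sq n • x = 0 → x = 0

/-- An unstable module is nil-closed if it is reduced and `Ker Sq₁ = Im Sq₀`
(on homogeneous elements, `Sq₁ x = Sq^{|x|-1} x` and `Sq₀ y = Sq^{|y|} y`). -/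
def IsNilClosedU (M : UnstableModule) : Prop :=
  IsReducedU M ∧
  ∀ (n : ℕ) (x : M.carrier), x ∈ M.grading n →
    (Sq (n - 1) • x = 0 ↔ ∃ (m : ℕ) (y : M.carrier), y ∈ M.grading m ∧ Sq m • y = x)

/-- A graded submodule: an `A`-submodule spanned by its homogeneous elements. -/
def IsGradedSub (M : UnstableModule) (p : Submodule SteenrodAlgebra M.carrier) : Prop :=
  ∀ x ∈ p, x ∈ Submodule.span (ZMod 2)
    ((p : Set M.carrier) ∩ ⋃ n, ((M.grading n : Submodule (ZMod 2) M.carrier) : Set M.carrier))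

/-- Injective objects of the category `U` (lifting property against monomorphisms). -/
def IsInjectiveU (I : UnstableModule) : Prop :=
  ∀ (M N : UnstableModule) (f : UnstableHom M N), Function.Injective f.toFun →
    ∀ g : UnstableHom M I, ∃ h : UnstableHom N I, ∀ x, h.toFun (f.toFun x) = g.toFun x

/-- `i : M ↪ E` exhibits `E` as the injective hull of `M` in `U`: `E` is injective,
`i` is injective, and the extension is essential (every non-trivial graded
`A`-submodule of `E` meets the image of `M` non-trivially). -/
def IsInjectiveHullU (M E : UnstableModule) (i : UnstableHom M E) : Prop :=
  IsInjectiveU E ∧ Function.Injective i.toFun ∧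
  ∀ p : Submodule SteenrodAlgebra E.carrier, IsGradedSub E p → p ≠ ⊥ →
    ∃ x, x ≠ 0 ∧ x ∈ p ∧ x ∈ Set.range i.toFun

/-- The Brown-Gitler module `J(n)`: it represents the functor `M ↦ (Mⁿ)^∨`, i.e.
there is a bijection `Hom_U(M, J(n)) ≅ Hom_{F_2}(Mⁿ, F_2)`, natural in `M`. -/
def IsBrownGitler (J : UnstableModule) (n : ℕ) : Prop :=
  ∃ Φ : ∀ M : UnstableModule, UnstableHom M J → (↥(M.grading n) →ₗ[ZMod 2] ZMod 2),
    (∀ M, Function.Bijective (Φ M)) ∧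
    ∀ (M M' : UnstableModule) (f : UnstableHom M' M) (g : UnstableHom M J)
      (x : ↥(M'.grading n)),
      Φ M' (g.comp f) x = Φ M g ⟨f.toFun x, f.map_grading n x x.2⟩

/-- `T` realizes the tensor product `M ⊗_{F_2} N` in `U` (with the Cartan formula
giving the `A`-action and the total grading). -/
def IsTensorOf (M N T : UnstableModule) : Prop :=
  ∃ β : M.carrier →ₗ[ZMod 2] N.carrier →ₗ[ZMod 2] T.carrier,
    (∀ (m n : ℕ) (x : M.carrier) (y : N.carrier), x ∈ M.grading m → y ∈ N.grading n →
      β x y ∈ T.grading (m + n)) ∧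
    (∀ (k : ℕ) (x : M.carrier) (y : N.carrier),
      Sq k • β x y = ∑ i ∈ Finset.range (k + 1), β (Sq i • x) (Sq (k - i) • y)) ∧
    Function.Bijective (TensorProduct.lift β)

/-- `I` is the direct sum (coproduct in `U`) of the family `F`. -/
def IsDirectSumOf (I : UnstableModule) {ι : Type} (F : ι → UnstableModule) : Prop :=
  letI := Classical.decEq ι
  ∃ j : ∀ i, UnstableHom (F i) I,
    Function.Bijective
      (DirectSum.toModule SteenrodAlgebra ι I.carrier fun i => (j i).toFun)

/-- An indecomposable (non-trivial) object of `U`: its only idempotent endomorphisms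
are `0` and the identity. -/
def IndecomposableU (L : UnstableModule) : Prop :=
  (∃ x : L.carrier, x ≠ 0) ∧
  ∀ e : UnstableHom L L, (∀ x, e.toFun (e.toFun x) = e.toFun x) →
    (∀ x, e.toFun x = 0) ∨ (∀ x, e.toFun x = x)

/-- `H^*V` for `V` an elementary abelian 2-group of rank `d`: a polynomial algebra
`F_2[t_1, …, t_d]` on generators of degree 1, with its unstable `A`-algebra structure
(`Sq¹ t = t²` and the Cartan formula).  `cV` is the top Dickson invariant
`∏_{0 ≠ u ∈ H¹V} u`. -/
structure HVSetup (d : ℕ) : Type 1 where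
  H : Type
  [ring : CommRing H]
  [modA : Module SteenrodAlgebra H]
  [modF : Module (ZMod 2) H]
  [tower : IsScalarTower (ZMod 2) SteenrodAlgebra H]
  grading : ℕ → Submodule (ZMod 2) H
  isInternal : DirectSum.IsInternal grading
  sq_mem : ∀ (i n : ℕ) (x : H), x ∈ grading n → Sq i • x ∈ grading (n + i)
  instability : ∀ (i n : ℕ) (x : H), x ∈ grading n → n < i → Sq i • x = 0
  one_mem : (1 : H) ∈ grading 0
  mul_mem : ∀ (m n : ℕ) (x y : H), x ∈ grading m → y ∈ grading n → x * y ∈ grading (m + n)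
  cartanH : ∀ (k : ℕ) (x y : H),
    Sq k • (x * y) = ∑ i ∈ Finset.range (k + 1), (Sq i • x) * (Sq (k - i) • y)
  gens : Fin d → H
  gens_deg : ∀ i, gens i ∈ grading 1
  sq_one_gen : ∀ i, Sq 1 • gens i = gens i * gens i
  monomial_indep : LinearIndependent (ZMod 2) (fun e : Fin d → ℕ => ∏ i, gens i ^ e i)
  monomial_span : ⊤ ≤ Submodule.span (ZMod 2) (Set.range fun e : Fin d → ℕ => ∏ i, gens i ^ e i)
  cV : H
  cV_spec : ∃ s : Finset H, (∀ u, u ∈ s ↔ (u ∈ grading 1 ∧ u ≠ 0)) ∧ cV = ∏ u ∈ s, u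

attribute [instance] HVSetup.ring HVSetup.modA HVSetup.modF HVSetup.tower

/-- `H^*V` as an object of `U`. -/
@[reducible] def HVSetup.toUnstable {d : ℕ} (V : HVSetup d) : UnstableModule where
  carrier := V.H
  grading := V.grading
  isInternal := V.isInternal
  sq_mem := V.sq_mem
  instability := V.instability

/-- A representative of an indecomposable direct factor of some `H^*((Z/2)^m)`
(an element of the set `𝓛` of the classification theorems). -/
def IsIndecInjFactor (L : UnstableModule) : Prop :=
  IndecomposableU L ∧
  ∃ (m : ℕ) (V : HVSetup m) (j : UnstableHom L V.toUnstable)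
    (r : UnstableHom V.toUnstable L), ∀ x, r.toFun (j.toFun x) = x

/-- An unstable `H^*V`-`A`-module: an object `E` of `U` together with a compatible
`H^*V`-module structure satisfying the Cartan formula, and the data of the unstable
`A`-module `Ē = F_2 ⊗_{H^*V} E = E / (H̃^*V · E)` with the projection `barπ : E → Ē`. -/
structure HVModule {d : ℕ} (V : HVSetup d) : Type 1 where
  E : UnstableModule
  [modH : Module V.H E.carrier]
  smul_grading : ∀ (m n : ℕ) (h : V.H) (x : E.carrier),
    h ∈ V.grading m → x ∈ E.grading n → h • x ∈ E.grading (m + n)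
  cartan : ∀ (k : ℕ) (h : V.H) (x : E.carrier),
    Sq k • (h • x) = ∑ i ∈ Finset.range (k + 1), (Sq i • h) • (Sq (k - i) • x)
  bar : UnstableModule
  barπ : UnstableHom E bar
  barπ_surj : Function.Surjective barπ.toFun
  barπ_ker : ∀ y : E.carrier, barπ.toFun y = 0 ↔
    y ∈ Submodule.span (ZMod 2)
      {z : E.carrier | ∃ (m : ℕ) (h : V.H) (x : E.carrier),
        1 ≤ m ∧ h ∈ V.grading m ∧ z = h • x}

attribute [instance] HVModule.modH

/-- Morphisms of `H^*V-U`: `H^*V`-linear and `A`-linear maps of degree zero. -/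
structure HVHom {d : ℕ} (V : HVSetup d) (M N : HVModule V) extends UnstableHom M.E N.E where
  map_hsmul : ∀ (h : V.H) (x : M.E.carrier), toFun (h • x) = h • toFun x

/-- `M ≅ N` in the category `H^*V-U`. -/
def HVIso {d : ℕ} {V : HVSetup d} (M N : HVModule V) : Prop :=
  ∃ (f : HVHom V M N) (g : HVHom V N M),
    (∀ x, g.toFun (f.toFun x) = x) ∧ ∀ y, f.toFun (g.toFun y) = y

/-- `ι : P → T` realizes `T` as `H^*V ⊗ P`, via the universal property: every `A`-linear
map from `P` to an unstable `H^*V`-`A`-module extends uniquely to an `H^*V`-`A`-linear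
map from `T`. -/
def IsHVTensor {d : ℕ} (V : HVSetup d) (P : UnstableModule) (T : HVModule V)
    (ι : UnstableHom P T.E) : Prop :=
  ∀ (N : HVModule V) (f : UnstableHom P N.E),
    ∃ g : HVHom V T N, (∀ x, g.toFun (ι.toFun x) = f.toFun x) ∧
      ∀ g' : HVHom V T N, (∀ x, g'.toFun (ι.toFun x) = f.toFun x) →
        ∀ y, g'.toFun y = g.toFun y

/-- Injective objects of the category `H^*V-U`. -/
def IsInjectiveHVU {d : ℕ} {V : HVSetup d} (I : HVModule V) : Prop :=
  ∀ (M N : HVModule V) (f : HVHom V M N), Function.Injective f.toFun →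
    ∀ g : HVHom V M I, ∃ h : HVHom V N I, ∀ x, h.toFun (f.toFun x) = g.toFun x

/-- `i : M ↪ E` exhibits `E` as the injective hull of `M` in `H^*V-U`. -/
def IsInjectiveHullHVU {d : ℕ} {V : HVSetup d} (M E : HVModule V) (i : HVHom V M E) : Prop :=
  IsInjectiveHVU E ∧ Function.Injective i.toFun ∧
  ∀ p : Submodule SteenrodAlgebra E.E.carrier, IsGradedSub E.E p →
    (∀ (h : V.H) (x : E.E.carrier), x ∈ p → h • x ∈ p) → p ≠ ⊥ →
    ∃ x, x ≠ 0 ∧ x ∈ p ∧ x ∈ Set.range i.toFun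

/-- `I` is the direct sum (in `H^*V-U`) of the family `F`. -/
def IsHVDirectSumOf {d : ℕ} {V : HVSetup d} (I : HVModule V) {ι : Type}
    (F : ι → HVModule V) : Prop :=
  letI := Classical.decEq ι
  ∃ j : ∀ i, HVHom V (F i) I,
    Function.Bijective
      (DirectSum.toModule SteenrodAlgebra ι I.E.carrier fun i => (j i).toFun)

/-- `T` realizes `M ⊗_{F_2} L` in `H^*V-U` (with `H^*V` acting on the first factor). -/
def IsHVTensorWithU {d : ℕ} {V : HVSetup d} (M : HVModule V) (L : UnstableModule)
    (T : HVModule V) : Prop :=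
  ∃ β : M.E.carrier →ₗ[ZMod 2] L.carrier →ₗ[ZMod 2] T.E.carrier,
    (∀ (m n : ℕ) (x : M.E.carrier) (y : L.carrier),
      x ∈ M.E.grading m → y ∈ L.grading n → β x y ∈ T.E.grading (m + n)) ∧
    (∀ (k : ℕ) (x : M.E.carrier) (y : L.carrier),
      Sq k • β x y = ∑ i ∈ Finset.range (k + 1), β (Sq i • x) (Sq (k - i) • y)) ∧
    (∀ (h : V.H) (x : M.E.carrier) (y : L.carrier), β (h • x) y = h • β x y) ∧
    Function.Bijective (TensorProduct.lift β)

/-- A morphism of setups `H^*(V/W) → H^*V` induced by a projection `V → V/W` onto a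
quotient by a subgroup `W`: an injective map of unstable `A`-algebras. -/
structure SetupMap {e d : ℕ} (U : HVSetup e) (V : HVSetup d) where
  toHom : UnstableHom U.toUnstable V.toUnstable
  map_one : toHom.toFun 1 = 1
  map_mul : ∀ x y, toHom.toFun (x * y) = toHom.toFun x * toHom.toFun y
  inj : Function.Injective toHom.toFun

/-- `ι : M → T` realizes `T` as the base change `H^*V ⊗_{H^*(V/W)} M` along
`ρ : H^*(V/W) → H^*V`, via the universal property of extension of scalars. -/
def IsBaseChangeOf {e d : ℕ} {U : HVSetup e} {V : HVSetup d} (ρ : SetupMap U V)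
    (M : HVModule U) (T : HVModule V) (ι : UnstableHom M.E T.E) : Prop :=
  (∀ (h : U.H) (x : M.E.carrier), ι.toFun (h • x) = ρ.toHom.toFun h • ι.toFun x) ∧
  ∀ (N : HVModule V) (f : UnstableHom M.E N.E),
    (∀ (h : U.H) (x : M.E.carrier), f.toFun (h • x) = ρ.toHom.toFun h • f.toFun x) →
    ∃ g : HVHom V T N, (∀ x, g.toFun (ι.toFun x) = f.toFun x) ∧
      ∀ g' : HVHom V T N, (∀ x, g'.toFun (ι.toFun x) = f.toFun x) →
        ∀ y, g'.toFun y = g.toFun y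

/-- The Brown-Gitler object `J_V(n)` of `H^*V-U`: it represents `M ↦ (Mⁿ)^∨` on
`H^*V-U`. -/
def IsHVBrownGitler {e : ℕ} (U : HVSetup e) (J : HVModule U) (n : ℕ) : Prop :=
  ∃ Φ : ∀ M : HVModule U, HVHom U M J → (↥(M.E.grading n) →ₗ[ZMod 2] ZMod 2),
    (∀ M, Function.Bijective (Φ M)) ∧
    ∀ (M M' : HVModule U) (f : HVHom U M' M) (g : HVHom U M J)
      (x : ↥(M'.E.grading n)),
      Φ M' ⟨g.toUnstableHom.comp f.toUnstableHom,
        fun h y => by simp [UnstableHom.comp, f.map_hsmul, g.map_hsmul]⟩ x =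
      Φ M g ⟨f.toFun x, f.map_grading n x x.2⟩

/-- The data of `Fix_V N` together with its couniversal property: `Fix_V` is left
adjoint to `H^*V ⊗ -`, and `η : N → H^*V ⊗ Fix_V N` is the unit (the adjoint of the
identity of `Fix_V N`). -/
structure FixData {d : ℕ} (V : HVSetup d) (N : HVModule V) where
  F : UnstableModule
  T : HVModule V
  ι : UnstableHom F T.E
  tensor : IsHVTensor V F T ι
  η : HVHom V N T
  univ : ∀ (P : UnstableModule) (T' : HVModule V) (ι' : UnstableHom P T'.E),
    IsHVTensor V P T' ι' → ∀ f : HVHom V N T',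
    ∃ φ : UnstableHom F P,
      (∀ g : HVHom V T T', (∀ x, g.toFun (ι.toFun x) = ι'.toFun (φ.toFun x)) →
        ∀ y, g.toFun (η.toFun y) = f.toFun y) ∧
      ∀ φ' : UnstableHom F P,
        (∀ g : HVHom V T T', (∀ x, g.toFun (ι.toFun x) = ι'.toFun (φ'.toFun x)) →
          ∀ y, g.toFun (η.toFun y) = f.toFun y) →
        ∀ z, φ'.toFun z = φ.toFun z

/-- `0 → M → I₀ → I₁` is the beginning of a minimal injective resolution in `U`:
`I₀` is the injective hull of `M` and `I₁` is the injective hull of `I₀/M`. -/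
def IsMinResStartU (M I0 I1 : UnstableModule) (e0 : UnstableHom M I0)
    (a : UnstableHom I0 I1) : Prop :=
  IsInjectiveHullU M I0 e0 ∧ IsInjectiveU I1 ∧
  (∀ x, a.toFun x = 0 ↔ x ∈ Set.range e0.toFun) ∧
  ∀ (C : UnstableModule) (q : UnstableHom I0 C), Function.Surjective q.toFun →
    (∀ x, q.toFun x = 0 ↔ x ∈ Set.range e0.toFun) →
    ∀ a' : UnstableHom C I1, (∀ x, a'.toFun (q.toFun x) = a.toFun x) →
      IsInjectiveHullU C I1 a'

/-- `0 → M → T₀ → T₁` is the beginning of a minimal injective resolution in `H^*V-U`. -/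
def IsMinResStartHV {d : ℕ} {V : HVSetup d} (M T0 T1 : HVModule V)
    (e0 : HVHom V M T0) (a : HVHom V T0 T1) : Prop :=
  IsInjectiveHullHVU M T0 e0 ∧ IsInjectiveHVU T1 ∧
  (∀ x, a.toFun x = 0 ↔ x ∈ Set.range e0.toFun) ∧
  ∀ (C : HVModule V) (q : HVHom V T0 C), Function.Surjective q.toFun →
    (∀ x, q.toFun x = 0 ↔ x ∈ Set.range e0.toFun) →
    ∀ a' : HVHom V C T1, (∀ x, a'.toFun (q.toFun x) = a.toFun x) →
      IsInjectiveHullHVU C T1 a'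

/-- `M` is (isomorphic to) the `n`-fold suspension `Σⁿ F_2`: one-dimensional,
concentrated in degree `n`. -/
def IsSphereLike (M : UnstableModule) (n : ℕ) : Prop :=
  (∀ (m : ℕ) (x : M.carrier), x ∈ M.grading m → m ≠ n → x = 0) ∧
  ∃ x, x ∈ M.grading n ∧ x ≠ 0 ∧ ∀ y ∈ M.grading n, y = 0 ∨ y = x

/-- `SM` realizes the suspension `Σ M` in `U`. -/
def IsSuspensionU (M SM : UnstableModule) : Prop :=
  ∃ s : M.carrier →+ SM.carrier, Function.Bijective s ∧
    (∀ (n : ℕ) (x : M.carrier), x ∈ M.grading n → s x ∈ SM.grading (n + 1)) ∧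
    ∀ (k : ℕ) (x : M.carrier), s (Sq k • x) = Sq k • s x

/-- `SM` realizes the suspension `Σ M` in `H^*V-U`. -/
def IsSuspensionHV {d : ℕ} {V : HVSetup d} (M SM : HVModule V) : Prop :=
  ∃ s : M.E.carrier →+ SM.E.carrier, Function.Bijective s ∧
    (∀ (n : ℕ) (x : M.E.carrier), x ∈ M.E.grading n → s x ∈ SM.E.grading (n + 1)) ∧
    (∀ (k : ℕ) (x : M.E.carrier), s (Sq k • x) = Sq k • s x) ∧
    ∀ (h : V.H) (x : M.E.carrier), s (h • x) = h • s x

/-- `M` realizes `Σ^dd (u · H^*V)`, the `dd`-fold suspension of the principal ideal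
generated by a homogeneous element `u` of degree `du` (an unstable `H^*V`-`A`-submodule
of `H^*V` since `u` is a product of linear forms): the witness `f` sends `h` to
`Σ^dd (u·h)`. -/
def IsSuspensionOfPrincipalIdeal {d : ℕ} (V : HVSetup d) (M : HVModule V)
    (dd du : ℕ) (u : V.H) : Prop :=
  u ∈ V.grading du ∧ u ≠ 0 ∧
  ∃ f : V.H →+ M.E.carrier,
    Function.Bijective f ∧
    (∀ (h h' : V.H), f (h' * h) = h' • f h) ∧
    (∀ (m : ℕ) (h : V.H), h ∈ V.grading m → f h ∈ M.E.grading (dd + du + m)) ∧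
    ∀ (k : ℕ) (h h' : V.H), Sq k • (u * h) = u * h' → Sq k • f h = f h'

/-- A `V`-CW-complex, recorded through its mod 2 cohomology `H^*X`, its mod 2
equivariant cohomology `H^*_V X` (the cohomology of the Borel construction, an
unstable `H^*V`-`A`-module) and the restriction map `H^*_V X → H^*X` to the fibre of
`X → X_{hV} → BV`.  The field `collapse_of_free` records the classical topological
fact that if `H^*_V X` is `H^*V`-free then the Serre spectral sequence collapses, so
that the restriction map identifies `F_2 ⊗_{H^*V} H^*_V X` with `H^*X`. -/
structure VCWComplex {d : ℕ} (V : HVSetup d) : Type 1 where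
  cohomology : UnstableModule
  equivariantCohomology : HVModule V
  restriction : UnstableHom equivariantCohomology.E cohomology
  restriction_hsmul : ∀ (m : ℕ) (h : V.H) (x : equivariantCohomology.E.carrier),
    1 ≤ m → h ∈ V.grading m → restriction.toFun (h • x) = 0
  collapse_of_free : Module.Free V.H equivariantCohomology.E.carrier →
    Function.Surjective restriction.toFun ∧
    ∀ y, restriction.toFun y = 0 ↔ equivariantCohomology.barπ.toFun y = 0

end
set_option synthInstance.maxHeartbeats 1000000
set_option maxHeartbeats 1000000

lemma zmod2_cases : ∀ c : ZMod 2, c = 0 ∨ c = 1 := by decide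

lemma zmod2_add_self {M : Type*} [AddCommMonoid M] [Module (ZMod 2) M] (x : M) : x + x = 0 := by
  have h : ((1 : ZMod 2) + 1) = 0 := by decide
  calc x + x = ((1 : ZMod 2) + 1) • x := by rw [add_smul, one_smul]
    _ = 0 := by rw [h, zero_smul]

lemma basis_sum_repr {R M ι : Type*} [Semiring R] [AddCommMonoid M] [Module R M]
    (b : Module.Basis ι R M) (x : M) : ∑ i ∈ (b.repr x).support, b.repr x i • b i = x := by
  conv_rhs => rw [← b.linearCombination_repr x]
  rw [Finsupp.linearCombination_apply, Finsupp.sum]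

lemma sq_zero_eq_one : Sq 0 = 1 := by
  have := RingQuot.mkAlgHom_rel (ZMod 2) AdemRel.unit
  simpa [Sq] using this

-- graded toolkit
section Graded
open scoped DirectSum
variable {M : Type} [AddCommGroup M] [Module (ZMod 2) M]
variable (g : ℕ → Submodule (ZMod 2) M) (hg : DirectSum.IsInternal g)

noncomputable def gdec (x : M) : ⨁ n, g n := (Equiv.ofBijective _ hg).symm x

lemma gdec_coe (x : M) : DirectSum.coeAddMonoidHom g (gdec g hg x) = x :=
  (Equiv.ofBijective _ hg).apply_symm_apply x

lemma gdec_eq (y : ⨁ n, g n) (x : M) (h : DirectSum.coeAddMonoidHom g y = x) :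
    gdec g hg x = y := by
  apply hg.injective
  rw [gdec_coe]; exact h.symm

noncomputable def gproj (n : ℕ) (x : M) : M := ↑(gdec g hg x n)

lemma gproj_mem (n : ℕ) (x : M) : gproj g hg n x ∈ g n := (gdec g hg x n).2

lemma gproj_add (n : ℕ) (x y : M) :
    gproj g hg n (x + y) = gproj g hg n x + gproj g hg n y := by
  have : gdec g hg (x + y) = gdec g hg x + gdec g hg y := by
    apply gdec_eq; rw [map_add, gdec_coe, gdec_coe]
  simp [gproj, this]

lemma gproj_zero (n : ℕ) : gproj g hg n (0 : M) = 0 := by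
  have : gdec g hg (0 : M) = 0 := by apply gdec_eq; rw [map_zero]
  simp [gproj, this]

lemma gproj_zsmul (n : ℕ) (c : ZMod 2) (x : M) :
    gproj g hg n (c • x) = c • gproj g hg n x := by
  rcases zmod2_cases c with rfl | rfl
  · simp [gproj_zero]
  · simp

lemma gdec_of_mem {k : ℕ} {x : M} (h : x ∈ g k) :
    gdec g hg x = DirectSum.of (fun n => ↥(g n)) k ⟨x, h⟩ := by
  apply gdec_eq; rw [DirectSum.coeAddMonoidHom_of]

lemma gproj_of_mem {k : ℕ} {x : M} (h : x ∈ g k) (n : ℕ) :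
    gproj g hg n x = if k = n then x else 0 := by
  rw [gproj, gdec_of_mem g hg h]
  rw [DirectSum.coe_of_apply]
  split <;> simp

lemma gproj_eq_self_of_mem {k : ℕ} {x : M} (h : x ∈ g k) : gproj g hg k x = x := by
  simp [gproj_of_mem g hg h]

open scoped Classical in
noncomputable def gsupp (x : M) : Finset ℕ := (gdec g hg x).support

open scoped Classical in
lemma sum_gproj (x : M) : ∑ n ∈ gsupp g hg x, gproj g hg n x = x := by
  classical
  conv_rhs => rw [← gdec_coe g hg x]
  rw [← DirectSum.sum_support_of (gdec g hg x)]
  rw [map_sum]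
  apply Finset.sum_congr rfl
  intro n _
  rw [DirectSum.coeAddMonoidHom_of]
  rfl

lemma gproj_not_mem_gsupp {x : M} {n : ℕ} (h : n ∉ gsupp g hg x) : gproj g hg n x = 0 := by
  classical
  have : gdec g hg x n = 0 := by
    simpa [gsupp, DFinsupp.mem_support_iff] using h
  simp [gproj, this]

lemma eq_zero_of_gproj_eq_zero {x : M} (h : ∀ n, gproj g hg n x = 0) : x = 0 := by
  rw [← sum_gproj g hg x]
  exact Finset.sum_eq_zero fun n _ => h n

lemma gproj_finset_sum {ι : Type*} (s : Finset ι) (f : ι → M) (n : ℕ) :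
    gproj g hg n (∑ i ∈ s, f i) = ∑ i ∈ s, gproj g hg n (f i) := by
  classical
  induction s using Finset.induction with
  | empty => simp [gproj_zero]
  | insert _ _ h ih => rw [Finset.sum_insert h, gproj_add, ih, Finset.sum_insert h]

end Graded

section Hlemmas
open scoped DirectSum
variable {d : ℕ} (V : HVSetup d)

/-- monomial -/
noncomputable def mono (e : Fin d → ℕ) : V.H := ∏ i, V.gens i ^ e i

/-- degree of a monomial exponent -/
def mdeg (e : Fin d → ℕ) : ℕ := ∑ i, e i

noncomputable def basisH : Module.Basis (Fin d → ℕ) (ZMod 2) V.H :=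
  Module.Basis.mk V.monomial_indep V.monomial_span

lemma basisH_apply (e : Fin d → ℕ) : basisH V e = mono V e := Module.Basis.mk_apply _ _ _

lemma pow_mem_grading (i : Fin d) (k : ℕ) : V.gens i ^ k ∈ V.grading k := by
  induction k with
  | zero => simpa using V.one_mem
  | succ m ih =>
    have := V.mul_mem m 1 _ _ ih (V.gens_deg i)
    rw [← pow_succ] at this
    exact this

lemma prod_mem_grading {ι : Type*} (s : Finset ι) (f : ι → V.H) (m : ι → ℕ)
    (h : ∀ i ∈ s, f i ∈ V.grading (m i)) :
    (∏ i ∈ s, f i) ∈ V.grading (∑ i ∈ s, m i) := by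
  classical
  induction s using Finset.induction with
  | empty => simpa using V.one_mem
  | @insert a s ha ih =>
    rw [Finset.prod_insert ha, Finset.sum_insert ha]
    exact V.mul_mem _ _ _ _ (h a (Finset.mem_insert_self a s))
      (ih fun i hi => h i (Finset.mem_insert_of_mem hi))

lemma mono_mem (e : Fin d → ℕ) : mono V e ∈ V.grading (mdeg e) :=
  prod_mem_grading V _ _ _ fun i _ => pow_mem_grading V i (e i)

lemma mdeg_eq_zero {e : Fin d → ℕ} : mdeg e = 0 ↔ e = 0 := by
  constructor
  · intro h
    funext i
    have := Finset.sum_eq_zero_iff.mp h i (Finset.mem_univ i)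
    simpa using this
  · rintro rfl; simp [mdeg]

lemma mono_zero : mono V 0 = 1 := by simp [mono]

lemma one_ne_zero_H : (1 : V.H) ≠ 0 := by
  have := (basisH V).ne_zero 0
  rwa [basisH_apply, mono_zero] at this

lemma mono_add (e e' : Fin d → ℕ) : mono V (e + e') = mono V e * mono V e' := by
  rw [mono, mono, mono, ← Finset.prod_mul_distrib]
  exact Finset.prod_congr rfl fun i _ => by simp [pow_add]

lemma zsmul_mul2 (c : ZMod 2) (x y : V.H) : (c • x) * y = c • (x * y) := by
  rcases zmod2_cases c with rfl | rfl <;> simp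

lemma mul_zsmul2 (c : ZMod 2) (x y : V.H) : x * (c • y) = c • (x * y) := by
  rcases zmod2_cases c with rfl | rfl <;> simp

lemma projH_zero_eq (h : V.H) :
    gproj V.grading V.isInternal 0 h = ((basisH V).repr h 0) • (1 : V.H) := by
  classical
  conv_lhs => rw [← basis_sum_repr (basisH V) h]
  rw [gproj_finset_sum]
  have key : ∀ e ∈ ((basisH V).repr h).support,
      gproj V.grading V.isInternal 0 ((((basisH V).repr h) e) • basisH V e)
      = if e = 0 then ((basisH V).repr h e) • (1 : V.H) else 0 := by
    intro e _
    rw [gproj_zsmul, basisH_apply, gproj_of_mem _ _ (mono_mem V e)]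
    by_cases he : e = 0
    · subst he; simp [mdeg_eq_zero, mono_zero]
    · rw [if_neg (fun h0 => he (mdeg_eq_zero.mp h0)), if_neg he, smul_zero]
  rw [Finset.sum_congr rfl key, Finset.sum_ite_eq' _ (0 : Fin d → ℕ)]
  split
  · rfl
  · next h0 =>
    rw [Finsupp.notMem_support_iff.mp h0, zero_smul]

lemma mem_grading_zero_eq (h : V.H) (hm : h ∈ V.grading 0) :
    h = ((basisH V).repr h 0) • (1 : V.H) := by
  conv_lhs => rw [← gproj_eq_self_of_mem V.grading V.isInternal hm]
  exact projH_zero_eq V h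

lemma repr_zero_of_mem_pos {h : V.H} {k : ℕ} (hk : 1 ≤ k) (hm : h ∈ V.grading k) :
    (basisH V).repr h 0 = 0 := by
  have h0 : gproj V.grading V.isInternal 0 h = 0 := by
    rw [gproj_of_mem _ _ hm, if_neg (by omega)]
  rw [projH_zero_eq] at h0
  rcases zmod2_cases ((basisH V).repr h 0) with hc | hc
  · exact hc
  · rw [hc, one_smul] at h0
    exact absurd h0 (one_ne_zero_H V)

/-- homogeneous elements lie in the span of monomials of the same degree -/
lemma mem_span_mono {h : V.H} {k : ℕ} (hm : h ∈ V.grading k) :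
    h ∈ Submodule.span (ZMod 2) {x : V.H | ∃ e, mdeg e = k ∧ x = mono V e} := by
  classical
  have h1 : h = ∑ e ∈ ((basisH V).repr h).support,
      gproj V.grading V.isInternal k ((((basisH V).repr h) e) • basisH V e) := by
    conv_lhs => rw [← gproj_eq_self_of_mem V.grading V.isInternal hm,
      ← basis_sum_repr (basisH V) h]
    rw [gproj_finset_sum]
  rw [h1]
  apply Submodule.sum_mem
  intro e _
  rw [gproj_zsmul, basisH_apply, gproj_of_mem _ _ (mono_mem V e)]
  by_cases he : mdeg e = k
  · rw [if_pos he]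
    exact Submodule.smul_mem _ _ (Submodule.subset_span ⟨e, he, rfl⟩)
  · rw [if_neg he, smul_zero]
    exact Submodule.zero_mem _

section Hsq
variable {d : ℕ} (V : HVSetup d)

lemma sq_zsmul {M : Type*} [AddCommGroup M] [Module SteenrodAlgebra M]
    [Module (ZMod 2) M] (k : ℕ) (c : ZMod 2) (x : M) :
    Sq k • (c • x) = c • (Sq k • x) := by
  rcases zmod2_cases c with rfl | rfl <;> simp

lemma sq0_mul {a b : ℕ} {x y : V.H} (hx : x ∈ V.grading a) (hy : y ∈ V.grading b) :
    Sq (a + b) • (x * y) = (Sq a • x) * (Sq b • y) := by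
  rw [V.cartanH]
  have hmem : a ∈ Finset.range (a + b + 1) := by
    rw [Finset.mem_range]; omega
  rw [Finset.sum_eq_single_of_mem a hmem]
  · rw [show a + b - a = b by omega]
  · intro i hi hne
    rcases Nat.lt_or_ge a i with hlt | hge
    · rw [V.instability i a x hx hlt, zero_mul]
    · have : b < a + b - i := by omega
      rw [V.instability (a + b - i) b y hy this, mul_zero]

lemma sq0_prod {ι : Type*} (s : Finset ι) (f : ι → V.H) (m : ι → ℕ)
    (h : ∀ i ∈ s, f i ∈ V.grading (m i)) :
    Sq (∑ i ∈ s, m i) • (∏ i ∈ s, f i) = ∏ i ∈ s, (Sq (m i) • f i) := by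
  classical
  induction s using Finset.induction with
  | empty => simp [sq_zero_eq_one]
  | @insert a s ha ih =>
    rw [Finset.prod_insert ha, Finset.sum_insert ha, Finset.prod_insert ha,
      sq0_mul V (h a (Finset.mem_insert_self a s))
        (prod_mem_grading V s f m fun i hi => h i (Finset.mem_insert_of_mem hi)),
      ih fun i hi => h i (Finset.mem_insert_of_mem hi)]

lemma sq0_gen_pow (i : Fin d) (k : ℕ) :
    Sq k • (V.gens i ^ k) = V.gens i ^ k * V.gens i ^ k := by
  induction k with
  | zero => simp [sq_zero_eq_one]
  | succ m ih =>
    have h1 : Sq (1 + m) • (V.gens i * V.gens i ^ m)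
        = (Sq 1 • V.gens i) * (Sq m • V.gens i ^ m) :=
      sq0_mul V (V.gens_deg i) (pow_mem_grading V i m)
    rw [show m + 1 = 1 + m by omega, pow_add, pow_one, h1, V.sq_one_gen, ih]
    ring

lemma sq0_mono (e : Fin d → ℕ) :
    Sq (mdeg e) • mono V e = mono V e * mono V e := by
  rw [mdeg, mono, sq0_prod V _ _ _ fun i _ => pow_mem_grading V i (e i)]
  rw [← Finset.prod_mul_distrib]
  exact Finset.prod_congr rfl fun i _ => sq0_gen_pow V i (e i)

lemma sum_mul_self {ι : Type*} (s : Finset ι) (f : ι → V.H) :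
    (∑ i ∈ s, f i) * (∑ i ∈ s, f i) = ∑ i ∈ s, f i * f i := by
  classical
  induction s using Finset.induction with
  | empty => simp
  | @insert a s ha ih =>
    rw [Finset.sum_insert ha, Finset.sum_insert ha, add_mul, mul_add, mul_add, ih]
    have hcross : f a * (∑ i ∈ s, f i) + ((∑ i ∈ s, f i) * f a + ∑ i ∈ s, f i * f i)
        = ∑ i ∈ s, f i * f i := by
      rw [mul_comm (∑ i ∈ s, f i) (f a), ← add_assoc, zmod2_add_self, zero_add]
    rw [add_assoc, hcross]

lemma zsmul_mul_zsmul (c : ZMod 2) (x y : V.H) : (c • x) * (c • y) = c • (x * y) := by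
  rcases zmod2_cases c with rfl | rfl <;> simp

lemma sq0_eq_mul_self {m : ℕ} {h : V.H} (hm : h ∈ V.grading m) :
    Sq m • h = h * h := by
  classical
  set c := (basisH V).repr h with hc
  set s := c.support.filter (fun e => mdeg e = m) with hs
  have hsum : h = ∑ e ∈ s, c e • mono V e := by
    have h1 : h = ∑ e ∈ c.support,
        gproj V.grading V.isInternal m (c e • basisH V e) := by
      conv_lhs => rw [← gproj_eq_self_of_mem V.grading V.isInternal hm,
        ← basis_sum_repr (basisH V) h]
      rw [gproj_finset_sum]
    rw [h1, hs, Finset.sum_filter]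
    apply Finset.sum_congr rfl
    intro e _
    rw [gproj_zsmul, basisH_apply, gproj_of_mem _ _ (mono_mem V e)]
    by_cases he : mdeg e = m
    · rw [if_pos he, if_pos he]
    · rw [if_neg he, if_neg he, smul_zero]
  rw [hsum, Finset.smul_sum, sum_mul_self]
  apply Finset.sum_congr rfl
  intro e he
  have hdeg : mdeg e = m := (Finset.mem_filter.mp he).2
  rw [sq_zsmul, ← hdeg, sq0_mono, zsmul_mul_zsmul]

lemma frob_inj {h : V.H} (hh : h * h = 0) : h = 0 := by
  classical
  set c := (basisH V).repr h with hc
  have hsum : h = ∑ e ∈ c.support, c e • mono V e := by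
    conv_lhs => rw [← basis_sum_repr (basisH V) h]
    exact Finset.sum_congr rfl fun e _ => by rw [basisH_apply]
  have hsq : (0 : V.H) = ∑ e ∈ c.support, c e • mono V (e + e) := by
    rw [← hh]
    conv_lhs => rw [hsum]
    rw [sum_mul_self]
    exact Finset.sum_congr rfl fun e _ => by
      rw [zsmul_mul_zsmul, mono_add]
  have hinj : Function.Injective (fun e : Fin d → ℕ => e + e) := by
    intro e e' hee
    funext i
    have := congrFun hee i
    simp only [Pi.add_apply] at this
    omega
  have hli : LinearIndependent (ZMod 2)
      ((fun e : Fin d → ℕ => ∏ i, V.gens i ^ e i) ∘ (fun e => e + e)) :=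
    V.monomial_indep.comp _ hinj
  have hz : ∀ e ∈ c.support, c e = 0 := by
    have := linearIndependent_iff'.mp hli c.support c ?_
    · exact this
    · rw [← hsq.symm]
      · exact Finset.sum_congr rfl fun e _ => by rw [Function.comp]; rfl
  rw [hsum]
  exact Finset.sum_eq_zero fun e he => by rw [hz e he, zero_smul]

lemma mono_split {e : Fin d → ℕ} {i : Fin d} (hi : e i ≠ 0) :
    mono V e = V.gens i * mono V (Function.update e i (e i - 1))
      ∧ mdeg e = 1 + mdeg (Function.update e i (e i - 1)) := by
  classical
  have hdecomp : e = Pi.single i 1 + Function.update e i (e i - 1) := by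
    funext j
    by_cases hj : j = i
    · subst hj; simp; omega
    · simp [Pi.single, Function.update, hj]
  have h1 : mono V (Pi.single i 1) = V.gens i := by
    rw [mono, Finset.prod_eq_single i]
    · simp
    · intro j _ hj; simp [Pi.single, hj]
    · intro hmem; exact absurd (Finset.mem_univ i) hmem
  have h2 : mdeg (Pi.single i 1) = 1 := by
    rw [mdeg, Finset.sum_eq_single i]
    · simp
    · intro j _ hj; simp [Pi.single, hj]
    · intro hmem; exact absurd (Finset.mem_univ i) hmem
  constructor
  · conv_lhs => rw [hdecomp]
    rw [mono_add, h1]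
  · conv_lhs => rw [hdecomp]
    rw [show mdeg (Pi.single i 1 + Function.update e i (e i - 1))
      = mdeg (Pi.single i 1) + mdeg (Function.update e i (e i - 1)) by
        rw [mdeg, mdeg, mdeg, ← Finset.sum_add_distrib]; rfl, h2]

end Hsq

section Elemmas
variable {d : ℕ} (V : HVSetup d) (E : HVModule V)

lemma zsmulH_smul (c : ZMod 2) (h : V.H) (y : E.E.carrier) :
    ((c • h) • y : E.E.carrier) = c • (h • y) := by
  rcases zmod2_cases c with rfl | rfl <;> simp

lemma hsmul_zsmul (c : ZMod 2) (h : V.H) (y : E.E.carrier) :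
    (h • (c • y) : E.E.carrier) = c • (h • y) := by
  rcases zmod2_cases c with rfl | rfl <;> simp

lemma sq0_smulE {a b : ℕ} {h : V.H} {y : E.E.carrier}
    (hh : h ∈ V.grading a) (hy : y ∈ E.E.grading b) :
    Sq (a + b) • (h • y) = (Sq a • h) • (Sq b • y) := by
  rw [E.cartan]
  have hmem : a ∈ Finset.range (a + b + 1) := by rw [Finset.mem_range]; omega
  rw [Finset.sum_eq_single_of_mem a hmem]
  · rw [show a + b - a = b by omega]
  · intro i hi hne
    rcases Nat.lt_or_ge a i with hlt | hge
    · rw [V.instability i a h hh hlt, zero_smul]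
    · have : b < a + b - i := by omega
      rw [E.E.instability (a + b - i) b y hy this, smul_zero]

/-- projection of `h • y` for homogeneous `y` -/
lemma projE_smul_right {b : ℕ} {y : E.E.carrier} (hy : y ∈ E.E.grading b)
    (h : V.H) (n : ℕ) :
    gproj E.E.grading E.E.isInternal n (h • y)
      = if b ≤ n then (gproj V.grading V.isInternal (n - b) h) • y else 0 := by
  classical
  have hh : h • y = ∑ j ∈ gsupp V.grading V.isInternal h,
      (gproj V.grading V.isInternal j h) • y := by
    conv_lhs => rw [← sum_gproj V.grading V.isInternal h]
    rw [Finset.sum_smul]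
  rw [hh, gproj_finset_sum]
  have key : ∀ j ∈ gsupp V.grading V.isInternal h,
      gproj E.E.grading E.E.isInternal n ((gproj V.grading V.isInternal j h) • y)
      = if j = n - b ∧ b ≤ n then (gproj V.grading V.isInternal j h) • y else 0 := by
    intro j _
    rw [gproj_of_mem _ _ (E.smul_grading j b _ _ (gproj_mem _ _ j h) hy)]
    split
    · next hcond => rw [if_pos (by omega)]
    · next hcond => rw [if_neg (by omega)]
  rw [Finset.sum_congr rfl key]
  by_cases hbn : b ≤ n
  · simp only [hbn, and_true]
    rw [Finset.sum_ite_eq' _ (n - b)]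
    split
    · rfl
    · next hns =>
      rw [gproj_not_mem_gsupp _ _ hns, zero_smul, if_pos trivial]
  · rw [if_neg hbn]
    apply Finset.sum_eq_zero
    intro j _
    rw [if_neg (by tauto)]

/-- projection of `h • y` for homogeneous `h` -/
lemma projE_smul_left {m : ℕ} {h : V.H} (hh : h ∈ V.grading m)
    (y : E.E.carrier) (n : ℕ) :
    gproj E.E.grading E.E.isInternal n (h • y)
      = if m ≤ n then h • (gproj E.E.grading E.E.isInternal (n - m) y) else 0 := by
  classical
  have hy : h • y = ∑ j ∈ gsupp E.E.grading E.E.isInternal y,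
      h • (gproj E.E.grading E.E.isInternal j y) := by
    conv_lhs => rw [← sum_gproj E.E.grading E.E.isInternal y]
    rw [Finset.smul_sum]
  rw [hy, gproj_finset_sum]
  have key : ∀ j ∈ gsupp E.E.grading E.E.isInternal y,
      gproj E.E.grading E.E.isInternal n (h • (gproj E.E.grading E.E.isInternal j y))
      = if j = n - m ∧ m ≤ n then h • (gproj E.E.grading E.E.isInternal j y) else 0 := by
    intro j _
    rw [gproj_of_mem _ _ (E.smul_grading m j _ _ hh (gproj_mem _ _ j y))]
    split
    · next hcond => rw [if_pos (by omega)]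
    · next hcond => rw [if_neg (by omega)]
  rw [Finset.sum_congr rfl key]
  by_cases hmn : m ≤ n
  · simp only [hmn, and_true]
    rw [Finset.sum_ite_eq' _ (n - m)]
    split
    · rfl
    · next hns =>
      rw [gproj_not_mem_gsupp _ _ hns, smul_zero, if_pos trivial]
  · rw [if_neg hmn]
    apply Finset.sum_eq_zero
    intro j _
    rw [if_neg (by tauto)]

lemma barpi_zsmul (c : ZMod 2) (y : E.E.carrier) :
    E.barπ.toFun (c • y) = c • E.barπ.toFun y := by
  rcases zmod2_cases c with rfl | rfl <;> simp

/-- the augmentation coefficient -/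
noncomputable def epsH (h : V.H) : ZMod 2 := (basisH V).repr h 0

lemma epsH_zero : epsH V (0 : V.H) = 0 := by simp [epsH]

lemma epsH_of_mem_pos {h : V.H} {k : ℕ} (hk : 1 ≤ k) (hm : h ∈ V.grading k) :
    epsH V h = 0 := repr_zero_of_mem_pos V hk hm

lemma barpi_ker_pos {m : ℕ} {h : V.H} (hm : 1 ≤ m) (hh : h ∈ V.grading m)
    (y : E.E.carrier) : E.barπ.toFun (h • y) = 0 := by
  rw [E.barπ_ker]
  exact Submodule.subset_span ⟨m, h, y, hm, hh, rfl⟩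

lemma bar_smul (h : V.H) (y : E.E.carrier) :
    E.barπ.toFun (h • y) = epsH V h • E.barπ.toFun y := by
  classical
  have hh : h • y = ∑ j ∈ gsupp V.grading V.isInternal h,
      (gproj V.grading V.isInternal j h) • y := by
    conv_lhs => rw [← sum_gproj V.grading V.isInternal h]
    rw [Finset.sum_smul]
  rw [hh, map_sum]
  have key : ∀ j ∈ gsupp V.grading V.isInternal h,
      E.barπ.toFun ((gproj V.grading V.isInternal j h) • y)
      = if j = 0 then epsH V h • E.barπ.toFun y else 0 := by
    intro j _
    by_cases hj : j = 0
    · subst hj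
      rw [if_pos rfl, projH_zero_eq]
      rw [zsmulH_smul, one_smul, barpi_zsmul]
      rfl
    · rw [if_neg hj]
      exact barpi_ker_pos V E (by omega) (gproj_mem _ _ j h) y
  rw [Finset.sum_congr rfl key, Finset.sum_ite_eq' _ (0 : ℕ)]
  split
  · rfl
  · next h0 =>
    have hp : gproj V.grading V.isInternal 0 h = 0 := gproj_not_mem_gsupp _ _ h0
    rw [projH_zero_eq] at hp
    rcases zmod2_cases ((basisH V).repr h 0) with hc | hc
    · rw [show epsH V h = 0 from hc, zero_smul]
    · rw [hc, one_smul] at hp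
      exact absurd hp (one_ne_zero_H V)

lemma bar_proj (y : E.E.carrier) (k : ℕ) :
    E.barπ.toFun (gproj E.E.grading E.E.isInternal k y)
      = gproj E.bar.grading E.bar.isInternal k (E.barπ.toFun y) := by
  classical
  have hy : E.barπ.toFun y = ∑ j ∈ gsupp E.E.grading E.E.isInternal y,
      E.barπ.toFun (gproj E.E.grading E.E.isInternal j y) := by
    conv_lhs => rw [← sum_gproj E.E.grading E.E.isInternal y]
    rw [map_sum]
  rw [hy, gproj_finset_sum]
  have key : ∀ j ∈ gsupp E.E.grading E.E.isInternal y,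
      gproj E.bar.grading E.bar.isInternal k
        (E.barπ.toFun (gproj E.E.grading E.E.isInternal j y))
      = if j = k then E.barπ.toFun (gproj E.E.grading E.E.isInternal j y) else 0 := by
    intro j _
    rw [gproj_of_mem _ _ (E.barπ.map_grading j _ (gproj_mem _ _ j y))]
  rw [Finset.sum_congr rfl key, Finset.sum_ite_eq' _ k]
  split
  · rfl
  · next hk =>
    rw [gproj_not_mem_gsupp _ _ hk, map_zero]

lemma exists_lift (k : ℕ) (v : E.bar.carrier) (hv : v ∈ E.bar.grading k) :
    ∃ y, y ∈ E.E.grading k ∧ E.barπ.toFun y = v := by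
  obtain ⟨y₀, hy₀⟩ := E.barπ_surj v
  refine ⟨gproj E.E.grading E.E.isInternal k y₀, gproj_mem _ _ k y₀, ?_⟩
  rw [bar_proj, hy₀, gproj_eq_self_of_mem _ _ hv]

end Elemmas

section BasisBar
variable {d : ℕ} (V : HVSetup d) (E : HVModule V)

noncomputable def uB : Module.Basis (Σ n : ℕ, ↥(Module.Basis.ofVectorSpaceIndex (ZMod 2) ↥(E.bar.grading n)))
    (ZMod 2) E.bar.carrier :=
  E.bar.isInternal.collectedBasis (fun n => Module.Basis.ofVectorSpace (ZMod 2) ↥(E.bar.grading n))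

lemma uB_mem (α : Σ n : ℕ, ↥(Module.Basis.ofVectorSpaceIndex (ZMod 2) ↥(E.bar.grading n))) :
    uB V E α ∈ E.bar.grading α.1 :=
  DirectSum.IsInternal.collectedBasis_mem _ _ _

lemma uB_apply (n : ℕ) (i : ↥(Module.Basis.ofVectorSpaceIndex (ZMod 2) ↥(E.bar.grading n))) :
    uB V E ⟨n, i⟩ = ↑(Module.Basis.ofVectorSpace (ZMod 2) ↥(E.bar.grading n) i) := by
  rw [uB, DirectSum.IsInternal.collectedBasis_coe]

noncomputable def eE (α : Σ n : ℕ, ↥(Module.Basis.ofVectorSpaceIndex (ZMod 2) ↥(E.bar.grading n))) :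
    E.E.carrier :=
  (exists_lift V E α.1 (uB V E α) (uB_mem V E α)).choose

lemma eE_mem (α) : eE V E α ∈ E.E.grading α.1 :=
  (exists_lift V E α.1 (uB V E α) (uB_mem V E α)).choose_spec.1

lemma eE_bar (α) : E.barπ.toFun (eE V E α) = uB V E α :=
  (exists_lift V E α.1 (uB V E α) (uB_mem V E α)).choose_spec.2

noncomputable def Phi :
    ((Σ n : ℕ, ↥(Module.Basis.ofVectorSpaceIndex (ZMod 2) ↥(E.bar.grading n))) →₀ V.H)
      →ₗ[V.H] E.E.carrier :=
  Finsupp.linearCombination V.H (eE V E)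

lemma Phi_apply (f) : Phi V E f = ∑ α ∈ f.support, f α • eE V E α := by
  rw [Phi, Finsupp.linearCombination_apply, Finsupp.sum]

lemma Phi_single (α) (h : V.H) : Phi V E (Finsupp.single α h) = h • eE V E α := by
  rw [Phi, Finsupp.linearCombination_single]

lemma barPhi (f) : E.barπ.toFun (Phi V E f)
    = ∑ α ∈ f.support, epsH V (f α) • uB V E α := by
  rw [Phi_apply, map_sum]
  exact Finset.sum_congr rfl fun α _ => by rw [bar_smul, eE_bar]

/-- generating set: multiples of the `tᵢ` by elements of degree `n - 1` -/
def posSet (n : ℕ) : Set E.E.carrier :=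
  {w | ∃ i y, 1 ≤ n ∧ y ∈ E.E.grading (n - 1) ∧ w = V.gens i • y}

lemma ker_decompose {n : ℕ} {z : E.E.carrier} (hz : E.barπ.toFun z = 0)
    (hzn : z ∈ E.E.grading n) :
    z ∈ Submodule.span (ZMod 2) (posSet V E n) := by
  have hmono : ∀ (m : ℕ), 1 ≤ m → m ≤ n → ∀ (y' : E.E.carrier), y' ∈ E.E.grading (n - m) →
      ∀ h', h' ∈ Submodule.span (ZMod 2) {x : V.H | ∃ e, mdeg e = m ∧ x = mono V e} →
      h' • y' ∈ Submodule.span (ZMod 2) (posSet V E n) := by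
    intro m hm hmn y' hy'm h' hsp
    induction hsp using Submodule.span_induction with
    | mem w' hw' =>
      obtain ⟨e, hdeg, rfl⟩ := hw'
      have he0 : ∃ i, e i ≠ 0 := by
        by_contra hc
        push_neg at hc
        have : e = 0 := funext fun i => hc i
        rw [this] at hdeg
        simp [mdeg] at hdeg
        omega
      obtain ⟨i, hi⟩ := he0
      obtain ⟨hsplit, hdsplit⟩ := mono_split V hi
      rw [hsplit, mul_smul]
      apply Submodule.subset_span
      refine ⟨i, mono V (Function.update e i (e i - 1)) • y', by omega, ?_, rfl⟩
      have := E.smul_grading _ _ _ _ (mono_mem V (Function.update e i (e i - 1))) hy'm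
      have harith : mdeg (Function.update e i (e i - 1)) + (n - m) = n - 1 := by omega
      rwa [harith] at this
    | zero => rw [zero_smul]; exact Submodule.zero_mem _
    | add a b ha hb iha ihb => rw [add_smul]; exact Submodule.add_mem _ iha ihb
    | smul c a ha ihha => rw [zsmulH_smul]; exact Submodule.smul_mem _ _ ihha
  have key : ∀ (w : E.E.carrier), w ∈ Submodule.span (ZMod 2)
      {w : E.E.carrier | ∃ (m : ℕ) (h : V.H) (x : E.E.carrier),
        1 ≤ m ∧ h ∈ V.grading m ∧ w = h • x} →
      gproj E.E.grading E.E.isInternal n w ∈ Submodule.span (ZMod 2) (posSet V E n) := by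
    intro w hw
    induction hw using Submodule.span_induction with
    | mem w hw =>
      obtain ⟨m, h, x, hm, hhm, rfl⟩ := hw
      rw [projE_smul_left V E hhm]
      split
      · next hcase =>
        exact hmono m hm hcase _ (gproj_mem _ _ _ x) h (mem_span_mono V hhm)
      · exact Submodule.zero_mem _
    | zero => rw [gproj_zero]; exact Submodule.zero_mem _
    | add a b ha hb iha ihb => rw [gproj_add]; exact Submodule.add_mem _ iha ihb
    | smul c a ha ihha => rw [gproj_zsmul]; exact Submodule.smul_mem _ _ ihha
  have := key z ((E.barπ_ker z).mp hz)
  rwa [gproj_eq_self_of_mem _ _ hzn] at this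

/-- the range of Phi as a `ZMod 2`-submodule -/
noncomputable def rangeZ : Submodule (ZMod 2) E.E.carrier where
  carrier := Set.range (Phi V E)
  add_mem' := by
    rintro x y ⟨f, rfl⟩ ⟨g, rfl⟩
    exact ⟨f + g, map_add _ f g⟩
  zero_mem' := ⟨0, map_zero _⟩
  smul_mem' := by
    rintro c x ⟨f, rfl⟩
    rcases zmod2_cases c with rfl | rfl
    · exact ⟨0, by rw [map_zero, zero_smul]⟩
    · exact ⟨f, by rw [one_smul]⟩

lemma grading_mem_range : ∀ (n : ℕ) (x : E.E.carrier), x ∈ E.E.grading n → x ∈ rangeZ V E := by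
  intro n
  induction n using Nat.strong_induction_on with
  | _ n ih =>
  intro x hx
  classical
  have hv : E.barπ.toFun x ∈ E.bar.grading n := E.barπ.map_grading n x hx
  set b := Module.Basis.ofVectorSpace (ZMod 2) ↥(E.bar.grading n) with hb
  set cv := b.repr ⟨E.barπ.toFun x, hv⟩ with hcv
  set y := ∑ i ∈ cv.support, cv i • eE V E ⟨n, i⟩ with hy
  have hy_mem : y ∈ E.E.grading n := by
    apply Submodule.sum_mem
    intro i _
    rcases zmod2_cases (cv i) with hc | hc
    · rw [hc, zero_smul]; exact Submodule.zero_mem _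
    · rw [hc, one_smul]; exact eE_mem V E ⟨n, i⟩
  have hy_range : y ∈ rangeZ V E := by
    apply Submodule.sum_mem
    intro i _
    apply Submodule.smul_mem
    exact ⟨Finsupp.single ⟨n, i⟩ 1, by rw [Phi_single, one_smul]⟩
  have hbar_y : E.barπ.toFun y = E.barπ.toFun x := by
    rw [hy, map_sum]
    have step : ∀ i ∈ cv.support,
        E.barπ.toFun (cv i • eE V E ⟨n, i⟩) = ((cv i • b i : ↥(E.bar.grading n)) : E.bar.carrier) := by
      intro i _
      rw [barpi_zsmul, eE_bar, uB_apply]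
      rcases zmod2_cases (cv i) with hc | hc <;> rw [hc] <;> simp [hb, Module.Basis.coe_ofVectorSpace]
    rw [Finset.sum_congr rfl step]
    have : (((∑ i ∈ cv.support, cv i • b i : ↥(E.bar.grading n))) : E.bar.carrier)
        = ∑ i ∈ cv.support, ((cv i • b i : ↥(E.bar.grading n)) : E.bar.carrier) := by
      exact Submodule.coe_sum _ _ _
    rw [← this, basis_sum_repr b ⟨E.barπ.toFun x, hv⟩]
  have hker : E.barπ.toFun (x - y) = 0 := by
    rw [map_sub, hbar_y, sub_self]
  have hxy_mem : x - y ∈ E.E.grading n := Submodule.sub_mem _ hx hy_mem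
  have hdec := ker_decompose V E hker hxy_mem
  have hsub : Submodule.span (ZMod 2) (posSet V E n) ≤ rangeZ V E := by
    rw [Submodule.span_le]
    rintro w ⟨i, y', hn1, hy', rfl⟩
    obtain ⟨f, rfl⟩ := ih (n - 1) (by omega) y' hy'
    exact ⟨V.gens i • f, map_smul _ _ _⟩
  have hx_minus : x - y ∈ rangeZ V E := hsub hdec
  have := Submodule.add_mem _ hx_minus hy_range
  rwa [sub_add_cancel] at this

lemma surjPhi : Function.Surjective (Phi V E) := by
  intro x
  have hx : (∑ nn ∈ gsupp E.E.grading E.E.isInternal x,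
      gproj E.E.grading E.E.isInternal nn x) ∈ rangeZ V E := by
    apply Submodule.sum_mem
    intro nn _
    exact grading_mem_range V E nn _ (gproj_mem _ _ nn x)
  rw [sum_gproj] at hx
  exact hx

end BasisBar

section Injectivity
variable {d : ℕ} (V : HVSetup d) (E : HVModule V)

/-- coordinatewise graded filtration submodule -/
noncomputable def MM (m : ℕ) :
    Submodule (ZMod 2)
      ((Σ n : ℕ, ↥(Module.Basis.ofVectorSpaceIndex (ZMod 2) ↥(E.bar.grading n))) →₀ V.H) where
  carrier := {f | ∀ α j, j < m → gproj V.grading V.isInternal j (f α) = 0}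
  add_mem' := by
    intro f g hf hg α j hj
    rw [Finsupp.add_apply, gproj_add, hf α j hj, hg α j hj, add_zero]
  zero_mem' := by
    intro α j hj
    rw [Finsupp.coe_zero, Pi.zero_apply, gproj_zero]
  smul_mem' := by
    intro c f hf α j hj
    rcases zmod2_cases c with rfl | rfl
    · rw [zero_smul, Finsupp.coe_zero, Pi.zero_apply, gproj_zero]
    · rw [one_smul]; exact hf α j hj

lemma eps_zero_of_ker (f) (hf : Phi V E f = 0) (α) : epsH V (f α) = 0 := by
  classical
  have h0 : ∑ β ∈ f.support, epsH V (f β) • uB V E β = 0 := by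
    rw [← barPhi, hf, map_zero]
  by_cases hα : α ∈ f.support
  · exact linearIndependent_iff'.mp (uB V E).linearIndependent f.support
      (fun β => epsH V (f β)) h0 α hα
  · rw [Finsupp.notMem_support_iff.mp hα, epsH_zero]

lemma shift_lemma {m : ℕ} {h' : V.H}
    (hh' : ∀ j, j < m → gproj V.grading V.isInternal j h' = 0)
    (i : Fin d) {j : ℕ} (hj : j < m + 1) :
    gproj V.grading V.isInternal j (V.gens i * h') = 0 := by
  classical
  have hdecomp : V.gens i * h' = ∑ k ∈ gsupp V.grading V.isInternal h',
      V.gens i * gproj V.grading V.isInternal k h' := by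
    conv_lhs => rw [← sum_gproj V.grading V.isInternal h']
    rw [Finset.mul_sum]
  rw [hdecomp, gproj_finset_sum]
  apply Finset.sum_eq_zero
  intro k _
  rcases Nat.lt_or_ge k m with hk | hk
  · rw [hh' k hk, mul_zero, gproj_zero]
  · rw [gproj_of_mem _ _ (V.mul_mem 1 k _ _ (V.gens_deg i) (gproj_mem _ _ k h')),
      if_neg (by omega)]

lemma ker_in_spanG (f) (hf : Phi V E f = 0) :
    f ∈ Submodule.span (ZMod 2)
      {z : (Σ n : ℕ, ↥(Module.Basis.ofVectorSpaceIndex (ZMod 2) ↥(E.bar.grading n))) →₀ V.H |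
        ∃ i w, z = V.gens i • w} := by
  classical
  set G := {z : (Σ n : ℕ, ↥(Module.Basis.ofVectorSpaceIndex (ZMod 2) ↥(E.bar.grading n))) →₀ V.H |
        ∃ i w, z = V.gens i • w} with hG
  -- singles of homogeneous positive-degree elements are in span G
  have hsingle : ∀ α (j : ℕ), 1 ≤ j → ∀ h' : V.H,
      h' ∈ Submodule.span (ZMod 2) {x : V.H | ∃ e, mdeg e = j ∧ x = mono V e} →
      Finsupp.single α h' ∈ Submodule.span (ZMod 2) G := by
    intro α j hj h' hsp
    induction hsp using Submodule.span_induction with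
    | mem w hw =>
      obtain ⟨e, hdeg, rfl⟩ := hw
      have he0 : ∃ i, e i ≠ 0 := by
        by_contra hc
        push_neg at hc
        have : e = 0 := funext fun i => hc i
        rw [this] at hdeg
        simp [mdeg] at hdeg
        omega
      obtain ⟨i, hi⟩ := he0
      obtain ⟨hsplit, _⟩ := mono_split V hi
      rw [hsplit]
      apply Submodule.subset_span
      refine ⟨i, Finsupp.single α (mono V (Function.update e i (e i - 1))), ?_⟩
      rw [Finsupp.smul_single, smul_eq_mul]
    | zero => rw [Finsupp.single_zero]; exact Submodule.zero_mem _
    | add a b ha hb iha ihb =>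
      rw [Finsupp.single_add]; exact Submodule.add_mem _ iha ihb
    | smul c a ha ihha =>
      rw [← Finsupp.smul_single]; exact Submodule.smul_mem _ _ ihha
  -- decompose f into singles
  have hf_sum : f = ∑ α ∈ f.support, Finsupp.single α (f α) := by
    conv_lhs => rw [← Finsupp.sum_single f]
    rfl
  rw [hf_sum]
  apply Submodule.sum_mem
  intro α hα
  have hcoord : f α = ∑ j ∈ gsupp V.grading V.isInternal (f α),
      gproj V.grading V.isInternal j (f α) := (sum_gproj _ _ _).symm
  have hsingle_sum : Finsupp.single α (f α)
      = ∑ j ∈ gsupp V.grading V.isInternal (f α),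
          Finsupp.single α (gproj V.grading V.isInternal j (f α)) := by
    conv_lhs => rw [hcoord]
    exact map_sum (Finsupp.singleAddHom α) _ _
  rw [hsingle_sum]
  apply Submodule.sum_mem
  intro j _
  by_cases hj : j = 0
  · subst hj
    have : gproj V.grading V.isInternal 0 (f α) = 0 := by
      rw [projH_zero_eq, show (basisH V).repr (f α) 0 = epsH V (f α) from rfl,
        eps_zero_of_ker V E f hf α, zero_smul]
    rw [this, Finsupp.single_zero]
    exact Submodule.zero_mem _
  · exact hsingle α j (by omega) _ (mem_span_mono V (gproj_mem _ _ j (f α)))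

lemma Phi_ker_filtration (hfree : Module.Free V.H E.E.carrier) :
    ∀ m : ℕ, ∀ f, Phi V E f = 0 → f ∈ MM V E m := by
  classical
  haveI := hfree
  obtain ⟨s, hs⟩ := Module.projective_lifting_property (Phi V E) LinearMap.id (surjPhi V E)
  set q := LinearMap.id - s.comp (Phi V E) with hq
  have hq0 : ∀ f, Phi V E (q f) = 0 := by
    intro f
    have : Phi V E (s (Phi V E f)) = Phi V E f := by
      have := congrArg (fun g => g (Phi V E f)) hs
      simpa using this
    simp [hq, LinearMap.sub_apply, map_sub, this]
  have hqk : ∀ f, Phi V E f = 0 → q f = f := by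
    intro f hf
    simp [hq, LinearMap.sub_apply, hf]
  intro m
  induction m with
  | zero => intro f _ α j hj; omega
  | succ m ihm =>
    intro f hf
    have hfG := ker_in_spanG V E f hf
    have hqf : q f ∈ MM V E (m + 1) := by
      clear hf
      induction hfG using Submodule.span_induction with
      | mem z hz =>
        obtain ⟨i, w, rfl⟩ := hz
        rw [map_smul]
        intro α j hj
        rw [Finsupp.smul_apply, smul_eq_mul]
        exact shift_lemma V (fun j' hj' => ihm (q w) (hq0 w) α j' hj') i hj
      | zero => rw [map_zero]; exact Submodule.zero_mem _
      | add a b ha hb iha ihb => rw [map_add]; exact Submodule.add_mem _ iha ihb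
      | smul c a ha ihha =>
        rcases zmod2_cases c with rfl | rfl
        · rw [zero_smul, map_zero]; exact Submodule.zero_mem _
        · rwa [one_smul]
    rwa [hqk f hf] at hqf

lemma Phi_inj (hfree : Module.Free V.H E.E.carrier) (f) (hf : Phi V E f = 0) : f = 0 := by
  classical
  apply Finsupp.ext
  intro α
  have : f α = ∑ j ∈ gsupp V.grading V.isInternal (f α),
      gproj V.grading V.isInternal j (f α) := (sum_gproj _ _ _).symm
  rw [this, Finsupp.coe_zero, Pi.zero_apply]
  apply Finset.sum_eq_zero
  intro j _
  exact Phi_ker_filtration V E hfree (j + 1) f hf α j (by omega)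

end Injectivity

section Expansion
variable {d : ℕ} (V : HVSetup d) (E : HVModule V)

lemma expansion (D : ℕ) (x : E.E.carrier) (hx : x ∈ E.E.grading D) :
    ∃ f, Phi V E f = x ∧ (∀ α, f α ∈ V.grading (D - α.1)) ∧ ∀ α, D < α.1 → f α = 0 := by
  classical
  obtain ⟨f₀, hf₀⟩ := surjPhi V E x
  set f : (Σ n : ℕ, ↥(Module.Basis.ofVectorSpaceIndex (ZMod 2) ↥(E.bar.grading n))) →₀ V.H :=
    Finsupp.onFinset f₀.support
      (fun α => if α.1 ≤ D then gproj V.grading V.isInternal (D - α.1) (f₀ α) else 0)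
      (by
        intro α hne
        rw [Finsupp.mem_support_iff]
        intro h0
        apply hne
        show (if α.1 ≤ D then gproj V.grading V.isInternal (D - α.1) (f₀ α) else 0) = 0
        rw [h0]
        split
        · exact gproj_zero _ _ _
        · rfl) with hf
  have happly : ∀ α, f α = if α.1 ≤ D then gproj V.grading V.isInternal (D - α.1) (f₀ α) else 0 :=
    fun α => rfl
  refine ⟨f, ?_, ?_, ?_⟩
  · -- Phi f = x
    have h1 : Phi V E f = ∑ α ∈ f₀.support, f α • eE V E α := by
      rw [Phi_apply]
      apply Finset.sum_subset (Finsupp.support_onFinset_subset)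
      intro α _ hα
      rw [Finsupp.notMem_support_iff.mp hα, zero_smul]
    have h2 : x = ∑ α ∈ f₀.support, gproj E.E.grading E.E.isInternal D (f₀ α • eE V E α) := by
      conv_lhs => rw [← gproj_eq_self_of_mem E.E.grading E.E.isInternal hx, ← hf₀, Phi_apply]
      rw [gproj_finset_sum]
    rw [h1, h2]
    apply Finset.sum_congr rfl
    intro α _
    rw [projE_smul_right V E (eE_mem V E α), happly α]
    split
    · rfl
    · rw [zero_smul]
  · intro α
    rw [happly α]
    split
    · exact gproj_mem _ _ _ _
    · exact Submodule.zero_mem _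
  · intro α hα
    rw [happly α, if_neg (by omega)]

end Expansion

theorem reduced_of_bar_reduced' {d : ℕ} (V : HVSetup d) (E : HVModule V)
    (hfree : Module.Free V.H E.E.carrier)
    (hred : IsReducedU E.bar) :
    IsReducedU E.E := by
  intro n x hx hsq
  by_contra hx0
  classical
  obtain ⟨c, hcx, hchom, hczero⟩ := expansion V E n x hx
  set s := c.support with hs
  have hsne : s.Nonempty := by
    rw [hs, Finset.nonempty_iff_ne_empty]
    intro hemp
    exact hx0 (by rw [← hcx, Finsupp.support_eq_empty.mp hemp, map_zero])
  have hdeg_le : ∀ α ∈ s, α.1 ≤ n := by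
    intro α hα
    by_contra h
    exact (Finsupp.mem_support_iff.mp hα) (hczero α (by omega))
  set p := (s.image (fun α => α.1)).max' (hsne.image _) with hp
  have hpmem : ∃ α₀ ∈ s, α₀.1 = p := by
    have hmax := (s.image (fun α => α.1)).max'_mem (hsne.image _)
    rw [Finset.mem_image] at hmax
    obtain ⟨α₀, hα₀, h⟩ := hmax
    exact ⟨α₀, hα₀, h⟩
  obtain ⟨α₀, hα₀s, hα₀p⟩ := hpmem
  have hple : ∀ α ∈ s, α.1 ≤ p := fun α hα =>
    Finset.le_max' _ _ (Finset.mem_image_of_mem _ hα)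
  have hpn : p ≤ n := hα₀p ▸ hdeg_le α₀ hα₀s
  -- expansions of Sq₀ (e α)
  have hzmem : ∀ α, (Sq α.1 • eE V E α) ∈ E.E.grading (α.1 + α.1) := fun α =>
    E.E.sq_mem α.1 α.1 _ (eE_mem V E α)
  choose dd hdd1 hdd2 hdd3 using fun α => expansion V E (α.1 + α.1) _ (hzmem α)
  set Q : _ → V.H := fun α => Sq (n - α.1) • c α with hQ
  have hsqx : Sq n • x = Phi V E (∑ α ∈ s, Q α • dd α) := by
    rw [map_sum]
    have hx_sum : x = ∑ α ∈ s, c α • eE V E α := by rw [← hcx, Phi_apply]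
    rw [hx_sum, Finset.smul_sum]
    apply Finset.sum_congr rfl
    intro α hα
    have hα_le : α.1 ≤ n := hdeg_le α hα
    have h1 : Sq n • (c α • eE V E α) = (Sq (n - α.1) • c α) • (Sq α.1 • eE V E α) := by
      have := sq0_smulE V E (hchom α) (eE_mem V E α)
      rwa [show n - α.1 + α.1 = n by omega] at this
    rw [h1, ← hdd1 α, ← map_smul]
  have hg0 : (∑ α ∈ s, Q α • dd α) = 0 :=
    Phi_inj V E hfree _ (by rw [← hsqx, hsq])
  have hcoords : ∀ β, ∑ α ∈ s, Q α * dd α β = 0 := by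
    intro β
    have h1 : (∑ α ∈ s, Q α • dd α) β = ∑ α ∈ s, Q α * dd α β := by
      rw [Finsupp.finset_sum_apply]
      exact Finset.sum_congr rfl fun α _ => by rw [Finsupp.smul_apply, smul_eq_mul]
    rw [← h1, hg0, Finsupp.coe_zero, Pi.zero_apply]
  set sp := s.filter (fun α => α.1 = p) with hsp
  have hα₀sp : α₀ ∈ sp := Finset.mem_filter.mpr ⟨hα₀s, hα₀p⟩
  have hwzero : ∀ β, β.1 = p + p → ∑ α ∈ sp, epsH V (dd α β) • c α = 0 := by
    intro β hβ
    apply frob_inj V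
    rw [sum_mul_self]
    have hterm : ∀ α ∈ sp, (epsH V (dd α β) • c α) * (epsH V (dd α β) • c α)
        = Q α * dd α β := by
      intro α hα
      obtain ⟨hαs, hαp⟩ := Finset.mem_filter.mp hα
      have hcα : c α ∈ V.grading (n - p) := by rw [← hαp]; exact hchom α
      have hQα : Q α = c α * c α := by
        rw [hQ]
        show Sq (n - α.1) • c α = c α * c α
        rw [hαp]
        exact sq0_eq_mul_self V hcα
      have hddmem : dd α β ∈ V.grading 0 := by
        have := hdd2 α β
        rwa [show α.1 + α.1 - β.1 = 0 by omega] at this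
      have hddeq : dd α β = epsH V (dd α β) • (1 : V.H) :=
        mem_grading_zero_eq V _ hddmem
      rw [zsmul_mul_zsmul, hQα]
      conv_rhs => rw [hddeq]
      rw [mul_zsmul2, mul_one]
    rw [Finset.sum_congr rfl hterm]
    have hext : ∑ α ∈ sp, Q α * dd α β = ∑ α ∈ s, Q α * dd α β := by
      apply Finset.sum_subset (Finset.filter_subset _ _)
      intro α hαs hαnsp
      have hαlt : α.1 < p := by
        have h1 := hple α hαs
        have h2 : ¬(α.1 = p) := by
          intro h
          exact hαnsp (Finset.mem_filter.mpr ⟨hαs, h⟩)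
        omega
      rw [hdd3 α β (by omega), mul_zero]
    rw [hext, hcoords β]
  -- the bar element associated to a coordinate functional
  have hrepr_zero : ∀ μ : Fin d → ℕ, (basisH V).repr (c α₀) μ = 0 := by
    intro μ
    set γ : _ → ZMod 2 := fun α => (basisH V).repr (c α) μ with hγ
    set v := ∑ α ∈ sp, γ α • uB V E α with hv
    have hvmem : v ∈ E.bar.grading p := by
      apply Submodule.sum_mem
      intro α hα
      have hαp := (Finset.mem_filter.mp hα).2
      rcases zmod2_cases (γ α) with hc | hc
      · rw [hc, zero_smul]; exact Submodule.zero_mem _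
      · rw [hc, one_smul, ← hαp]; exact uB_mem V E α
    have hsqv : Sq p • v = 0 := by
      set D := sp.biUnion (fun α => (dd α).support) with hD
      have hterm : ∀ α ∈ sp, Sq p • (γ α • uB V E α)
          = ∑ β ∈ D, (γ α * epsH V (dd α β)) • uB V E β := by
        intro α hα
        have hαp := (Finset.mem_filter.mp hα).2
        rw [sq_zsmul]
        have h1 : Sq p • uB V E α = ∑ β ∈ (dd α).support, epsH V (dd α β) • uB V E β := by
          rw [← eE_bar V E α, ← hαp]
          rw [← map_smul, ← hdd1 α, barPhi]
        have h2 : Sq p • uB V E α = ∑ β ∈ D, epsH V (dd α β) • uB V E β := by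
          rw [h1]
          apply Finset.sum_subset
          · exact fun β hβ => Finset.mem_biUnion.mpr ⟨α, hα, hβ⟩
          · intro β _ hβ
            rw [Finsupp.notMem_support_iff.mp hβ, epsH_zero, zero_smul]
        rw [h2, Finset.smul_sum]
        exact Finset.sum_congr rfl fun β _ => by rw [smul_smul]
      rw [hv, Finset.smul_sum, Finset.sum_congr rfl hterm, Finset.sum_comm]
      apply Finset.sum_eq_zero
      intro β hβ
      rw [← Finset.sum_smul]
      have hcoef : ∑ α ∈ sp, γ α * epsH V (dd α β) = 0 := by
        rcases Nat.lt_trichotomy β.1 (p + p) with hlt | heq | hgt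
        · apply Finset.sum_eq_zero
          intro α hα
          have hαp := (Finset.mem_filter.mp hα).2
          have hmem := hdd2 α β
          have : epsH V (dd α β) = 0 :=
            epsH_of_mem_pos V (k := α.1 + α.1 - β.1) (by omega) hmem
          rw [this, mul_zero]
        · have h1 : (basisH V).repr (∑ α ∈ sp, epsH V (dd α β) • c α) μ
              = ∑ α ∈ sp, γ α * epsH V (dd α β) := by
            rw [map_sum, Finsupp.finset_sum_apply]
            exact Finset.sum_congr rfl fun α _ => by
              rw [map_smul, Finsupp.smul_apply, smul_eq_mul, mul_comm]
          rw [← h1, hwzero β heq, map_zero, Finsupp.coe_zero, Pi.zero_apply]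
        · apply Finset.sum_eq_zero
          intro α hα
          have hαp := (Finset.mem_filter.mp hα).2
          rw [hdd3 α β (by omega), epsH_zero, mul_zero]
      rw [hcoef, zero_smul]
    have hv0 : v = 0 := hred p v hvmem hsqv
    have hγz := linearIndependent_iff'.mp (uB V E).linearIndependent sp γ (by rw [← hv]; exact hv0)
    exact hγz α₀ hα₀sp
  have hc0 : c α₀ = 0 := by
    apply (basisH V).repr.injective
    rw [map_zero]
    exact Finsupp.ext hrepr_zero
  exact (Finsupp.mem_support_iff.mp hα₀s) hc0
/-- Corollary 3.2.2.  Let `E` be an unstable `H^*V`-`A`-module which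
is free as an `H^*V`-module and such that `Ē` is reduced as an unstable `A`-module.
Then `E` is reduced as an unstable `A`-module. -/
theorem reduced_of_bar_reduced {d : ℕ} (V : HVSetup d) (E : HVModule V)
    (hfree : Module.Free V.H E.E.carrier)
    (hred : IsReducedU E.bar) :
    IsReducedU E.E :=
  reduced_of_bar_reduced' V E hfree hred
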